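/- The operator T_\infty defined by T_\infty x = \|x\|_1^{2-m} H_\infty x^{m-1} for x \neq 0 and T_\infty 0 = 0 maps l^1 boundedly into l^2, with operator norm \sup_{\|x\|_1 = 1} \|T_\infty x\|_2 \leq \pi / \sqrt{6}. -/

import Mathlib

/-- The `i`-th component of `H_∞ x^{m-1}` (indices 0-based, so the denominator
`i + i_2 + ... + i_m - m + 1` becomes `(i + ∑ k, j k) + 1`). -/
noncomputable def hilbertComp (m : ℕ) (x : ℕ → ℝ) (i : ℕ) : ℝ :=
  ∑' j : Fin (m - 1) → ℕ, (∏ k, x (j k)) / (((i + ∑ k, j k) + 1 : ℕ) : ℝ)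

open Classical in
/-- The operator `T_∞`. -/
noncomputable def Tinf (m : ℕ) (x : ℕ → ℝ) (i : ℕ) : ℝ :=
  if x = 0 then 0 else (∑' k, |x k|) ^ (2 - (m : ℤ)) * hilbertComp m x i

set_option maxHeartbeats 1000000 in
lemma hasSum_pi_prod (x : ℕ → ℝ) (hx : Summable fun i => |x i|) (n : ℕ) :
    HasSum (fun j : Fin n → ℕ => ∏ k, |x (j k)|) ((∑' k, |x k|) ^ n) := by
  induction n with
  | zero =>
      simpa using hasSum_single (f := fun _ : Fin 0 → ℕ => (1:ℝ)) (fun k => 0)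
        (fun b hb => absurd (Subsingleton.elim b _) hb)
  | succ n ih =>
      have hsummable : Summable (fun p : ℕ × (Fin n → ℕ) => |x p.1| * ∏ k, |x (p.2 k)|) := by
        apply summable_mul_of_summable_norm (f := fun i : ℕ => |x i|)
          (g := fun j : Fin n → ℕ => ∏ k, |x (j k)|)
        · simpa using hx
        · refine ih.summable.congr fun j => ?_
          simp [Real.norm_eq_abs, abs_of_nonneg
            (Finset.prod_nonneg fun _ _ => abs_nonneg (x _))]
      have hmul : HasSum (fun p : ℕ × (Fin n → ℕ) => |x p.1| * ∏ k, |x (p.2 k)|)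
          ((∑' k, |x k|) * (∑' k, |x k|) ^ n) :=
        HasSum.mul (f := fun i : ℕ => |x i|)
          (g := fun j : Fin n → ℕ => ∏ k, |x (j k)|) hx.hasSum ih hsummable
      have heq : (fun j : Fin (n+1) → ℕ => ∏ k, |x (j k)|)
          = (fun p : ℕ × (Fin n → ℕ) => |x p.1| * ∏ k, |x (p.2 k)|)
            ∘ (Fin.consEquiv (fun _ : Fin (n+1) => ℕ)).symm := by
        funext j
        simp [Fin.prod_univ_succ, Fin.tail]
      rw [pow_succ', heq]
      exact (Fin.consEquiv (fun _ : Fin (n+1) => ℕ)).symm.hasSum_iff.2 hmul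

lemma hilbertComp_summable_abs (m : ℕ) (x : ℕ → ℝ) (hx : Summable fun i => |x i|)
    (i : ℕ) :
    Summable (fun j : Fin (m-1) → ℕ =>
      |(∏ k, x (j k)) / (((i + ∑ k, j k) + 1 : ℕ) : ℝ)|) := by
  refine Summable.of_nonneg_of_le (fun _ => abs_nonneg _) (fun j => ?_)
    (hasSum_pi_prod x hx (m-1)).summable
  rw [abs_div, Finset.abs_prod]
  have h1 : (1:ℝ) ≤ (((i + ∑ k, j k) + 1 : ℕ) : ℝ) := by
    exact_mod_cast Nat.one_le_iff_ne_zero.2 (by omega)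
  rw [abs_of_nonneg (by positivity)]
  calc (∏ k, |x (j k)|) / (((i + ∑ k, j k) + 1 : ℕ) : ℝ)
      ≤ (∏ k, |x (j k)|) / 1 :=
        div_le_div_of_nonneg_left (Finset.prod_nonneg fun _ _ => abs_nonneg _)
          one_pos h1
    _ = ∏ k, |x (j k)| := div_one _

lemma hilbertComp_bound (m : ℕ) (x : ℕ → ℝ) (hx : Summable fun i => |x i|) (i : ℕ) :
    |hilbertComp m x i| ≤ (∑' k, |x k|) ^ (m - 1) / (i + 1) := by
  have hP := hasSum_pi_prod x hx (m-1)
  have habs := hilbertComp_summable_abs m x hx i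
  have hle : ∀ j : Fin (m-1) → ℕ,
      |(∏ k, x (j k)) / (((i + ∑ k, j k) + 1 : ℕ) : ℝ)|
        ≤ (∏ k, |x (j k)|) / (i + 1) := by
    intro j
    rw [abs_div, Finset.abs_prod, abs_of_nonneg (by positivity)]
    apply div_le_div_of_nonneg_left (Finset.prod_nonneg fun _ _ => abs_nonneg _)
      (by positivity)
    push_cast
    have hnn : (0:ℝ) ≤ ∑ k : Fin (m-1), ((j k : ℝ)) :=
      Finset.sum_nonneg fun _ _ => Nat.cast_nonneg _
    linarith
  have h1 : |hilbertComp m x i| ≤ ∑' j : Fin (m-1) → ℕ,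
      |(∏ k, x (j k)) / (((i + ∑ k, j k) + 1 : ℕ) : ℝ)| := by
    have := norm_tsum_le_tsum_norm (f := fun j : Fin (m-1) → ℕ =>
      (∏ k, x (j k)) / (((i + ∑ k, j k) + 1 : ℕ) : ℝ))
      (by simpa only [Real.norm_eq_abs] using habs)
    simpa only [hilbertComp, Real.norm_eq_abs] using this
  refine h1.trans ?_
  calc (∑' j : Fin (m-1) → ℕ, |(∏ k, x (j k)) / (((i + ∑ k, j k) + 1 : ℕ) : ℝ)|)
      ≤ ∑' j : Fin (m-1) → ℕ, (∏ k, |x (j k)|) / (i + 1) :=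
        Summable.tsum_le_tsum hle habs (hP.summable.div_const _)
    _ = (∑' k, |x k|) ^ (m - 1) / (i + 1) := by
        rw [tsum_div_const, hP.tsum_eq]

theorem Tinf_bounded (m : ℕ) (hm : 2 ≤ m) (x : ℕ → ℝ)
    (hx : Summable fun i => |x i|) :
    Summable (fun i : ℕ => (Tinf m x i) ^ 2) ∧
    Real.sqrt (∑' i : ℕ, (Tinf m x i) ^ 2)
      ≤ (Real.pi / Real.sqrt 6) * ∑' k, |x k| := by
  classical
  set A := ∑' k, |x k| with hA
  have hA0 : 0 ≤ A := tsum_nonneg fun _ => abs_nonneg _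
  have key : ∀ i : ℕ, |Tinf m x i| ≤ A / (i + 1) := by
    intro i
    by_cases h0 : x = 0
    · simp only [Tinf, if_pos h0, abs_zero]
      positivity
    · have hApos : 0 < A := by
        obtain ⟨k, hk⟩ := Function.ne_iff.1 h0
        have : 0 < |x k| := by simpa using hk
        exact lt_of_lt_of_le this (Summable.le_tsum hx k fun _ _ => abs_nonneg _)
      have hAne : A ≠ 0 := ne_of_gt hApos
      have hzpos : 0 < A ^ (2 - (m:ℤ)) := zpow_pos hApos _
      rw [Tinf, if_neg h0, abs_mul, abs_of_pos hzpos]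
      calc A ^ (2 - (m:ℤ)) * |hilbertComp m x i|
          ≤ A ^ (2 - (m:ℤ)) * (A ^ (m - 1) / (i + 1)) :=
            mul_le_mul_of_nonneg_left (hilbertComp_bound m x hx i) hzpos.le
        _ = A / (i + 1) := by
            have hz : (2 - (m:ℤ)) + ((m-1:ℕ):ℤ) = 1 := by omega
            rw [mul_div_assoc', ← zpow_natCast A (m-1), ← zpow_add₀ hAne, hz,
              zpow_one]
  have hBsum : Summable (fun i : ℕ => (A / (i + 1)) ^ 2) := by
    have h1 : Summable (fun i : ℕ => (1 : ℝ) / ((i : ℝ) + 1) ^ 2) := by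
      have := (summable_nat_add_iff 1).2
        (Real.summable_one_div_nat_pow.2 (le_refl 2))
      refine this.congr fun i => ?_
      push_cast; ring
    refine (h1.mul_left (A^2)).congr fun i => ?_
    field_simp
  have hsq : ∀ i : ℕ, (Tinf m x i) ^ 2 ≤ (A / (i + 1)) ^ 2 := by
    intro i
    rw [← sq_abs (Tinf m x i)]
    exact pow_le_pow_left₀ (abs_nonneg _) (key i) 2
  have hsum : Summable (fun i : ℕ => (Tinf m x i) ^ 2) :=
    Summable.of_nonneg_of_le (fun i => sq_nonneg _) hsq hBsum
  refine ⟨hsum, ?_⟩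
  have h0 : HasSum (fun n : ℕ => (1:ℝ) / ((n:ℝ) + 1) ^ 2) (Real.pi ^ 2 / 6) := by
    have h3 : HasSum (fun n : ℕ => (1:ℝ) / ((n+1:ℕ):ℝ)^2)
        (Real.pi^2/6 - ∑ i ∈ Finset.range 1, (1:ℝ)/(i:ℝ)^2) :=
      (hasSum_nat_add_iff' 1).2 (by simpa using hasSum_zeta_two)
    simpa using h3
  have hBval : HasSum (fun i : ℕ => (A / (i + 1)) ^ 2) (A ^ 2 * (Real.pi ^ 2 / 6)) := by
    have heq : (fun i : ℕ => (A / (i + 1)) ^ 2)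
        = fun i : ℕ => A ^ 2 * ((1:ℝ) / ((i:ℝ) + 1) ^ 2) := by
      funext i; field_simp
    rw [heq]
    exact h0.mul_left (A^2)
  have hle2 : ∑' i : ℕ, (Tinf m x i) ^ 2 ≤ A ^ 2 * (Real.pi ^ 2 / 6) := by
    rw [← hBval.tsum_eq]
    exact Summable.tsum_le_tsum hsq hsum hBval.summable
  calc Real.sqrt (∑' i : ℕ, (Tinf m x i) ^ 2)
      ≤ Real.sqrt (A ^ 2 * (Real.pi ^ 2 / 6)) := Real.sqrt_le_sqrt hle2
    _ = (Real.pi / Real.sqrt 6) * A := by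
        rw [Real.sqrt_mul (sq_nonneg A), Real.sqrt_sq hA0,
          Real.sqrt_div (sq_nonneg Real.pi), Real.sqrt_sq Real.pi_nonneg, mul_comm]
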